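/- Upper ε-envelopes of subsolutions are subsolutions: Let n ≥ 2, 0 < λ ≤ Λ, F⁺, F⁻ ∈ E(λ,Λ), let f^± be bounded and uniformly continuous on B₁^±, and g bounded and uniformly continuous on T. Let u be a bounded viscosity subsolution of the flat transmission problem [F^±(D²u) = f^± in B₁^±, u_{xₙ}⁺ − u_{xₙ}⁻ = g on T]. Fix 0 < ρ < 1 and ε > 0 with r_ε := (2ε‖u‖_{L^∞(B₁)})^{1/2} < ρ, and let u^ε be the upper ε-envelope of u in the x'-direction relative to B_ρ. Then for every 0 < r ≤ ρ − r_ε, u^ε is a viscosity subsolution on B_r of the flat transmission problem with interior data f^± − ω_{f^±}(r_ε) on B_r ∩ {±xₙ > 0} and interface data g − ω_g(r_ε) on T ∩ B_r. -/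

import Mathlib

open Metric Set Filter Asymptotics MeasureTheory

noncomputable section

namespace Transmission

/-- `ℝ^d` as a Euclidean space. -/
abbrev E (d : ℕ) : Type := EuclideanSpace ℝ (Fin d)

/-- The first `m` coordinates `x'` of a point `x = (x', xₙ) ∈ ℝ^{m+1}`. -/
def head {m : ℕ} (x : E (m + 1)) : E m := WithLp.toLp 2 (fun i : Fin m => x i.castSucc)

/-- The last coordinate `xₙ` of a point `x = (x', xₙ) ∈ ℝ^{m+1}`. -/
def lastc {m : ℕ} (x : E (m + 1)) : ℝ := x (Fin.last m)

/-- Assemble a point of `ℝ^{m+1}` from `x' ∈ ℝ^m` and `xₙ ∈ ℝ`. -/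
def snoc {m : ℕ} (x' : E m) (t : ℝ) : E (m + 1) :=
  WithLp.toLp 2 (fun i => (Fin.snoc (fun j => x' j) t : Fin (m + 1) → ℝ) i)

/-- The coordinate vector `eₙ`. -/
def en (m : ℕ) : E (m + 1) := EuclideanSpace.single (Fin.last m) 1

/-- `Ω⁺ = B₁ ∩ {xₙ > ψ(x')}`. -/
def Omegap {m : ℕ} (ψ : E m → ℝ) : Set (E (m + 1)) :=
  {x | x ∈ ball (0 : E (m + 1)) 1 ∧ ψ (head x) < lastc x}

/-- `Ω⁻ = B₁ ∩ {xₙ < ψ(x')}`. -/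
def Omegam {m : ℕ} (ψ : E m → ℝ) : Set (E (m + 1)) :=
  {x | x ∈ ball (0 : E (m + 1)) 1 ∧ lastc x < ψ (head x)}

/-- `Γ = B₁ ∩ {xₙ = ψ(x')}`. -/
def Gamma {m : ℕ} (ψ : E m → ℝ) : Set (E (m + 1)) :=
  {x | x ∈ ball (0 : E (m + 1)) 1 ∧ lastc x = ψ (head x)}

/-- The unit normal on `Γ` pointing into `Ω⁺`. -/
def normal {m : ℕ} (ψ : E m → ℝ) (x : E (m + 1)) : E (m + 1) :=
  (Real.sqrt (1 + ‖gradient ψ (head x)‖ ^ 2))⁻¹ • snoc (-(gradient ψ (head x))) 1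

/-- The Hessian matrix of `φ` at `x`. -/
def hess {d : ℕ} (φ : E d → ℝ) (x : E d) : Matrix (Fin d) (Fin d) ℝ :=
  fun i j => iteratedFDeriv ℝ 2 φ x ![EuclideanSpace.single i 1, EuclideanSpace.single j 1]

/-- Pucci minimal operator `M⁻_{λ,Λ}(M) = λ·Σ(pos eigenvalues) + Λ·Σ(neg eigenvalues)`. -/
def pucciInf {d : ℕ} (lam Lam : ℝ) (M : Matrix (Fin d) (Fin d) ℝ) : ℝ :=
  if h : M.IsHermitian then
    ∑ i, (if 0 ≤ h.eigenvalues i then lam else Lam) * h.eigenvalues i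
  else 0

/-- Pucci maximal operator `M⁺_{λ,Λ}(M) = Λ·Σ(pos eigenvalues) + λ·Σ(neg eigenvalues)`. -/
def pucciSup {d : ℕ} (lam Lam : ℝ) (M : Matrix (Fin d) (Fin d) ℝ) : ℝ :=
  if h : M.IsHermitian then
    ∑ i, (if 0 ≤ h.eigenvalues i then Lam else lam) * h.eigenvalues i
  else 0

/-- Operator norm of a matrix acting on Euclidean space. -/
def matNorm {d : ℕ} (M : Matrix (Fin d) (Fin d) ℝ) : ℝ :=
  ‖LinearMap.toContinuousLinearMap (Matrix.toEuclideanLin M)‖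

/-- The class `E(λ,Λ)` of uniformly elliptic operators with `F(0) = 0`. -/
def UniformlyElliptic {d : ℕ} (lam Lam : ℝ) (F : Matrix (Fin d) (Fin d) ℝ → ℝ) : Prop :=
  F 0 = 0 ∧
  ∀ M N : Matrix (Fin d) (Fin d) ℝ, M.IsHermitian → N.PosSemidef →
    lam * matNorm N ≤ F (M + N) - F M ∧ F (M + N) - F M ≤ Lam * matNorm N

/-- `φ` touches `u` from above at `x₀` (relative to `O`). -/
def TouchesAbove {d : ℕ} (u φ : E d → ℝ) (O : Set (E d)) (x₀ : E d) : Prop :=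
  φ x₀ = u x₀ ∧ ∀ᶠ x in nhds x₀, x ∈ O → u x ≤ φ x

/-- `φ` touches `u` from below at `x₀` (relative to `O`). -/
def TouchesBelow {d : ℕ} (u φ : E d → ℝ) (O : Set (E d)) (x₀ : E d) : Prop :=
  φ x₀ = u x₀ ∧ ∀ᶠ x in nhds x₀, x ∈ O → φ x ≤ u x

/-- Viscosity subsolution: `F(D²u) ≥ f` on `O`. -/
def ViscSubOn {d : ℕ} (F : Matrix (Fin d) (Fin d) ℝ → ℝ) (f u : E d → ℝ)
    (O : Set (E d)) : Prop :=
  ∀ x₀ ∈ O, ∀ φ : E d → ℝ, ContDiffAt ℝ 2 φ x₀ → TouchesAbove u φ O x₀ →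
    f x₀ ≤ F (hess φ x₀)

/-- Viscosity supersolution: `F(D²u) ≤ f` on `O`. -/
def ViscSupOn {d : ℕ} (F : Matrix (Fin d) (Fin d) ℝ → ℝ) (f u : E d → ℝ)
    (O : Set (E d)) : Prop :=
  ∀ x₀ ∈ O, ∀ φ : E d → ℝ, ContDiffAt ℝ 2 φ x₀ → TouchesBelow u φ O x₀ →
    F (hess φ x₀) ≤ f x₀

/-- `u ∈ S̄_{λ,Λ}(f)` on `O` (supersolution class). -/
def InSbar {d : ℕ} (lam Lam : ℝ) (f u : E d → ℝ) (O : Set (E d)) : Prop :=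
  LowerSemicontinuousOn u O ∧
  ∀ x₀ ∈ O, ∀ φ : E d → ℝ, ContDiffAt ℝ 2 φ x₀ → TouchesBelow u φ O x₀ →
    pucciInf lam Lam (hess φ x₀) ≤ f x₀

/-- `u ∈ S̲_{λ,Λ}(f)` on `O` (subsolution class). -/
def InSlower {d : ℕ} (lam Lam : ℝ) (f u : E d → ℝ) (O : Set (E d)) : Prop :=
  UpperSemicontinuousOn u O ∧
  ∀ x₀ ∈ O, ∀ φ : E d → ℝ, ContDiffAt ℝ 2 φ x₀ → TouchesAbove u φ O x₀ →
    f x₀ ≤ pucciSup lam Lam (hess φ x₀)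

/-- `u ∈ S*_{λ,Λ}(f)` on `O`. -/
def InSstar {d : ℕ} (lam Lam : ℝ) (f u : E d → ℝ) (O : Set (E d)) : Prop :=
  (∀ x₀ ∈ O, ∀ φ : E d → ℝ, ContDiffAt ℝ 2 φ x₀ → TouchesAbove u φ O x₀ →
    -|f x₀| ≤ pucciSup lam Lam (hess φ x₀)) ∧
  (∀ x₀ ∈ O, ∀ φ : E d → ℝ, ContDiffAt ℝ 2 φ x₀ → TouchesBelow u φ O x₀ →
    pucciInf lam Lam (hess φ x₀) ≤ |f x₀|)

/-- `u ∈ S_{λ,Λ}(0)` on `O`. -/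
def InS0 {d : ℕ} (lam Lam : ℝ) (u : E d → ℝ) (O : Set (E d)) : Prop :=
  (∀ x₀ ∈ O, ∀ φ : E d → ℝ, ContDiffAt ℝ 2 φ x₀ → TouchesAbove u φ O x₀ →
    0 ≤ pucciSup lam Lam (hess φ x₀)) ∧
  (∀ x₀ ∈ O, ∀ φ : E d → ℝ, ContDiffAt ℝ 2 φ x₀ → TouchesBelow u φ O x₀ →
    pucciInf lam Lam (hess φ x₀) ≤ 0)

/-- The viscosity transmission condition `u_ν⁺ − u_ν⁻ ≤ g` on `Γ` (supersolution side):
test functions touch `u` from below. -/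
def TransLE {m : ℕ} (ψ : E m → ℝ) (g u : E (m + 1) → ℝ) : Prop :=
  ∀ x₀ ∈ Gamma ψ, ∀ δ > (0 : ℝ), ∀ φ : E (m + 1) → ℝ, ∀ Lp Lm : E (m + 1) →L[ℝ] ℝ,
    ContinuousOn φ (ball x₀ δ) →
    ContDiffOn ℝ 1 φ (ball x₀ δ ∩ closure (Omegap ψ)) →
    ContDiffOn ℝ 1 φ (ball x₀ δ ∩ closure (Omegam ψ)) →
    HasFDerivWithinAt φ Lp (ball x₀ δ ∩ closure (Omegap ψ)) x₀ →
    HasFDerivWithinAt φ Lm (ball x₀ δ ∩ closure (Omegam ψ)) x₀ →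
    φ x₀ = u x₀ → (∀ x ∈ ball x₀ δ, φ x ≤ u x) →
    Lp (normal ψ x₀) - Lm (normal ψ x₀) ≤ g x₀

/-- The viscosity transmission condition `u_ν⁺ − u_ν⁻ ≥ g` on `Γ` (subsolution side):
test functions touch `u` from above. -/
def TransGE {m : ℕ} (ψ : E m → ℝ) (g u : E (m + 1) → ℝ) : Prop :=
  ∀ x₀ ∈ Gamma ψ, ∀ δ > (0 : ℝ), ∀ φ : E (m + 1) → ℝ, ∀ Lp Lm : E (m + 1) →L[ℝ] ℝ,
    ContinuousOn φ (ball x₀ δ) →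
    ContDiffOn ℝ 1 φ (ball x₀ δ ∩ closure (Omegap ψ)) →
    ContDiffOn ℝ 1 φ (ball x₀ δ ∩ closure (Omegam ψ)) →
    HasFDerivWithinAt φ Lp (ball x₀ δ ∩ closure (Omegap ψ)) x₀ →
    HasFDerivWithinAt φ Lm (ball x₀ δ ∩ closure (Omegam ψ)) x₀ →
    φ x₀ = u x₀ → (∀ x ∈ ball x₀ δ, u x ≤ φ x) →
    g x₀ ≤ Lp (normal ψ x₀) - Lm (normal ψ x₀)

/-- The viscosity transmission condition `u_ν⁺ − u_ν⁻ = g` on `Γ`. -/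
def TransEQ {m : ℕ} (ψ : E m → ℝ) (g u : E (m + 1) → ℝ) : Prop :=
  TransLE ψ g u ∧ TransGE ψ g u

/-- A viscosity solution of the curved-interface transmission problem
`F⁺(D²u) = f⁺` in `Ω⁺`, `F⁻(D²u) = f⁻` in `Ω⁻`, `u_ν⁺ − u_ν⁻ = g` on `Γ`. -/
def CurvedSol {m : ℕ} (ψ : E m → ℝ) (Fp Fm : Matrix (Fin (m + 1)) (Fin (m + 1)) ℝ → ℝ)
    (fp fm g u : E (m + 1) → ℝ) : Prop :=
  ContinuousOn u (ball (0 : E (m + 1)) 1) ∧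
  ViscSubOn Fp fp u (Omegap ψ) ∧ ViscSupOn Fp fp u (Omegap ψ) ∧
  ViscSubOn Fm fm u (Omegam ψ) ∧ ViscSupOn Fm fm u (Omegam ψ) ∧
  TransGE ψ g u ∧ TransLE ψ g u

/-! ### The flat interface setting -/

/-- `B_r⁺ = B_r ∩ {xₙ > 0}`. -/
def BpR (m : ℕ) (r : ℝ) : Set (E (m + 1)) :=
  {x | x ∈ ball (0 : E (m + 1)) r ∧ 0 < lastc x}

/-- `B_r⁻ = B_r ∩ {xₙ < 0}`. -/
def BmR (m : ℕ) (r : ℝ) : Set (E (m + 1)) :=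
  {x | x ∈ ball (0 : E (m + 1)) r ∧ lastc x < 0}

/-- `T_r = B_r ∩ {xₙ = 0}`. -/
def TR (m : ℕ) (r : ℝ) : Set (E (m + 1)) :=
  {x | x ∈ ball (0 : E (m + 1)) r ∧ lastc x = 0}

/-- The open upper half space `{xₙ > 0}`. -/
def Hp (m : ℕ) : Set (E (m + 1)) := {x | 0 < lastc x}

/-- The open lower half space `{xₙ < 0}`. -/
def Hm (m : ℕ) : Set (E (m + 1)) := {x | lastc x < 0}

/-- Flat interface subsolution condition `u_{xₙ}⁺ − u_{xₙ}⁻ ≥ g(x₀)` at `x₀ ∈ T` in the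
viscosity sense: test functions are `C²` up to the boundary on each closed half ball
and touch `u` from above. -/
def FlatTransSubAt {m : ℕ} (g u : E (m + 1) → ℝ) (x₀ : E (m + 1)) : Prop :=
  ∀ δ > (0 : ℝ), ∀ φ : E (m + 1) → ℝ, ∀ Lp Lm : E (m + 1) →L[ℝ] ℝ,
    ContinuousOn φ (ball x₀ δ) →
    ContDiffOn ℝ 2 φ (closure (ball x₀ δ ∩ Hp m)) →
    ContDiffOn ℝ 2 φ (closure (ball x₀ δ ∩ Hm m)) →
    HasFDerivWithinAt φ Lp (closure (ball x₀ δ ∩ Hp m)) x₀ →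
    HasFDerivWithinAt φ Lm (closure (ball x₀ δ ∩ Hm m)) x₀ →
    φ x₀ = u x₀ → (∀ x ∈ ball x₀ δ, u x ≤ φ x) →
    g x₀ ≤ Lp (en m) - Lm (en m)

/-- Flat interface supersolution condition `u_{xₙ}⁺ − u_{xₙ}⁻ ≤ g(x₀)` at `x₀ ∈ T`. -/
def FlatTransSupAt {m : ℕ} (g u : E (m + 1) → ℝ) (x₀ : E (m + 1)) : Prop :=
  ∀ δ > (0 : ℝ), ∀ φ : E (m + 1) → ℝ, ∀ Lp Lm : E (m + 1) →L[ℝ] ℝ,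
    ContinuousOn φ (ball x₀ δ) →
    ContDiffOn ℝ 2 φ (closure (ball x₀ δ ∩ Hp m)) →
    ContDiffOn ℝ 2 φ (closure (ball x₀ δ ∩ Hm m)) →
    HasFDerivWithinAt φ Lp (closure (ball x₀ δ ∩ Hp m)) x₀ →
    HasFDerivWithinAt φ Lm (closure (ball x₀ δ ∩ Hm m)) x₀ →
    φ x₀ = u x₀ → (∀ x ∈ ball x₀ δ, φ x ≤ u x) →
    Lp (en m) - Lm (en m) ≤ g x₀

/-- Viscosity subsolution of the flat transmission problem on `B_r`. -/
def FlatSub {m : ℕ} (r : ℝ) (Fp Fm : Matrix (Fin (m + 1)) (Fin (m + 1)) ℝ → ℝ)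
    (fp fm g u : E (m + 1) → ℝ) : Prop :=
  UpperSemicontinuousOn u (ball (0 : E (m + 1)) r) ∧
  ViscSubOn Fp fp u (BpR m r) ∧ ViscSubOn Fm fm u (BmR m r) ∧
  ∀ x₀ ∈ TR m r, FlatTransSubAt g u x₀

/-- Viscosity supersolution of the flat transmission problem on `B_r`. -/
def FlatSup {m : ℕ} (r : ℝ) (Fp Fm : Matrix (Fin (m + 1)) (Fin (m + 1)) ℝ → ℝ)
    (fp fm g u : E (m + 1) → ℝ) : Prop :=
  LowerSemicontinuousOn u (ball (0 : E (m + 1)) r) ∧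
  ViscSupOn Fp fp u (BpR m r) ∧ ViscSupOn Fm fm u (BmR m r) ∧
  ∀ x₀ ∈ TR m r, FlatTransSupAt g u x₀

/-- Viscosity solution of the flat transmission problem on `B_r`. -/
def FlatSol {m : ℕ} (r : ℝ) (Fp Fm : Matrix (Fin (m + 1)) (Fin (m + 1)) ℝ → ℝ)
    (fp fm g u : E (m + 1) → ℝ) : Prop :=
  ContinuousOn u (ball (0 : E (m + 1)) r) ∧
  FlatSub r Fp Fm fp fm g u ∧ FlatSup r Fp Fm fp fm g u

/-! ### Norms and miscellaneous quantities -/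

/-- Supremum of `f` over `s`. -/
def supOn {d : ℕ} (f : E d → ℝ) (s : Set (E d)) : ℝ := sSup (f '' s)

/-- Infimum of `f` over `s`. -/
def infOn {d : ℕ} (f : E d → ℝ) (s : Set (E d)) : ℝ := sInf (f '' s)

/-- Oscillation of `f` over `s`. -/
def oscOn {d : ℕ} (f : E d → ℝ) (s : Set (E d)) : ℝ := supOn f s - infOn f s

/-- `f` is bounded on `s`. -/
def BddOn {d : ℕ} (f : E d → ℝ) (s : Set (E d)) : Prop := ∃ M, ∀ x ∈ s, |f x| ≤ M

/-- The `L^p` norm of `f` on `s`. -/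
def lpNorm {d : ℕ} (p : ℝ) (f : E d → ℝ) (s : Set (E d)) : ℝ :=
  (∫ x in s, |f x| ^ p) ^ (1 / p)

/-- The average `L^p` norm `(⨍_s |f|^p)^{1/p}` of `f` on `s`. -/
def avgLp {d : ℕ} (p : ℝ) (f : E d → ℝ) (s : Set (E d)) : ℝ :=
  (⨍ x in s, |f x| ^ p) ^ (1 / p)

/-- `‖u‖_{C^{0,β}(s)} ≤ M` (up to a multiplicative constant): a sup bound together with a
`β`-Hölder seminorm bound on `s`. -/
def HolderBoundOn {d : ℕ} (β : ℝ) (u : E d → ℝ) (s : Set (E d)) (M : ℝ) : Prop :=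
  (∀ x ∈ s, |u x| ≤ M) ∧ ∀ x ∈ s, ∀ y ∈ s, |u x - u y| ≤ M * ‖x - y‖ ^ β

/-- `u ∈ C^{1,α}(s)` with `‖u‖_{C^{1,α}(s)} ≤ M` (up to a multiplicative constant),
derivatives understood up to the boundary. -/
def C1alphaBoundOn {d : ℕ} (α : ℝ) (u : E d → ℝ) (s : Set (E d)) (M : ℝ) : Prop :=
  ∃ du : E d → (E d →L[ℝ] ℝ),
    (∀ x ∈ s, HasFDerivWithinAt u (du x) s x) ∧
    (∀ x ∈ s, |u x| ≤ M) ∧ (∀ x ∈ s, ‖du x‖ ≤ M) ∧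
    (∀ x ∈ s, ∀ y ∈ s, ‖du x - du y‖ ≤ M * ‖x - y‖ ^ α)

/-- `u ∈ C^{2,α}(s)` with `‖u‖_{C^{2,α}(s)} ≤ M` (up to a multiplicative constant),
derivatives understood up to the boundary. -/
def C2alphaBoundOn {d : ℕ} (α : ℝ) (u : E d → ℝ) (s : Set (E d)) (M : ℝ) : Prop :=
  ∃ (du : E d → (E d →L[ℝ] ℝ)) (d2u : E d → (E d →L[ℝ] E d →L[ℝ] ℝ)),
    (∀ x ∈ s, HasFDerivWithinAt u (du x) s x) ∧
    (∀ x ∈ s, HasFDerivWithinAt du (d2u x) s x) ∧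
    (∀ x ∈ s, |u x| ≤ M) ∧ (∀ x ∈ s, ‖du x‖ ≤ M) ∧ (∀ x ∈ s, ‖d2u x‖ ≤ M) ∧
    (∀ x ∈ s, ∀ y ∈ s, ‖d2u x - d2u y‖ ≤ M * ‖x - y‖ ^ α)

/-- The quadratic form `v ↦ vᵀ A v` of a matrix. -/
def quadForm {d : ℕ} (A : Matrix (Fin d) (Fin d) ℝ) (v : E d) : ℝ :=
  ∑ i, ∑ j, A i j * v i * v j

/-- `φ` has one-sided first derivative `L` and one-sided Hessian `A` at `x₀` within `s`. -/
def HasHessianWithinAt {d : ℕ} (φ : E d → ℝ) (L : E d →L[ℝ] ℝ)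
    (A : Matrix (Fin d) (Fin d) ℝ) (s : Set (E d)) (x₀ : E d) : Prop :=
  (fun x => φ x - φ x₀ - L (x - x₀) - (1 / 2) * quadForm A (x - x₀))
    =o[nhdsWithin x₀ s] (fun x => ‖x - x₀‖ ^ 2)

/-- Upper `ε`-envelope of `u` in the `x'`-direction relative to `B_ρ`. -/
def upperEnv {m : ℕ} (ρ ε : ℝ) (u : E (m + 1) → ℝ) (y : E (m + 1)) : ℝ :=
  sSup ((fun x' : E m => u (snoc x' (lastc y)) - ε⁻¹ * ‖x' - head y‖ ^ 2) ''
    {x' : E m | snoc x' (lastc y) ∈ closedBall (0 : E (m + 1)) ρ})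

/-- Modulus of continuity of `h` on `s`. -/
def modulusOn {d : ℕ} (h : E d → ℝ) (s : Set (E d)) (t : ℝ) : ℝ :=
  sSup ((fun p : E d × E d => |h p.1 - h p.2|) ''
    {p : E d × E d | p.1 ∈ s ∧ p.2 ∈ s ∧ dist p.1 p.2 ≤ t})

end Transmission
section Basic

namespace Transmission

variable {m : ℕ}

lemma snoc_head_lastc (x : E (m + 1)) : snoc (head x) (lastc x) = x := by
  ext i
  refine Fin.lastCases ?_ (fun j => ?_) i
  · simp [snoc, lastc, Fin.snoc_last]
  · simp [snoc, head, Fin.snoc_castSucc]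

lemma head_snoc (x' : E m) (t : ℝ) : head (snoc x' t) = x' := by
  ext j; simp [head, snoc, Fin.snoc_castSucc]

lemma lastc_snoc (x' : E m) (t : ℝ) : lastc (snoc x' t) = t := by
  simp [lastc, snoc, Fin.snoc_last]

lemma snoc_add (a b : E m) (s t : ℝ) : snoc (a + b) (s + t) = snoc a s + snoc b t := by
  ext i
  refine Fin.lastCases ?_ (fun j => ?_) i <;>
    simp [snoc, Fin.snoc_last, Fin.snoc_castSucc, PiLp.add_apply]

lemma snoc_sub (a b : E m) (s t : ℝ) : snoc (a - b) (s - t) = snoc a s - snoc b t := by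
  ext i
  refine Fin.lastCases ?_ (fun j => ?_) i <;>
    simp [snoc, Fin.snoc_last, Fin.snoc_castSucc, PiLp.sub_apply]

lemma norm_snoc_sq (x' : E m) (t : ℝ) : ‖snoc x' t‖ ^ 2 = ‖x'‖ ^ 2 + t ^ 2 := by
  rw [EuclideanSpace.norm_eq, EuclideanSpace.norm_eq, Real.sq_sqrt (by positivity),
    Real.sq_sqrt (by positivity)]
  rw [Fin.sum_univ_castSucc]
  simp [snoc, Fin.snoc_last, Fin.snoc_castSucc, sq_abs]

lemma norm_head_le (x : E (m + 1)) : ‖head x‖ ≤ ‖x‖ := by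
  have h := norm_snoc_sq (head x) (lastc x)
  rw [snoc_head_lastc] at h
  nlinarith [norm_nonneg (head x), norm_nonneg x, sq_nonneg (lastc x)]

lemma abs_lastc_le (x : E (m + 1)) : |lastc x| ≤ ‖x‖ := by
  have h := norm_snoc_sq (head x) (lastc x)
  rw [snoc_head_lastc] at h
  nlinarith [norm_nonneg (head x), norm_nonneg x, abs_nonneg (lastc x), sq_abs (lastc x)]

lemma norm_snoc_le (x' : E m) (t : ℝ) : ‖snoc x' t‖ ≤ ‖x'‖ + |t| := by
  have h := norm_snoc_sq x' t
  nlinarith [norm_nonneg (snoc x' t), norm_nonneg x', abs_nonneg t, sq_abs t,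
    mul_nonneg (norm_nonneg x') (abs_nonneg t)]

lemma head_sub (x y : E (m + 1)) : head (x - y) = head x - head y := by
  ext j; simp [head, PiLp.sub_apply]

lemma lastc_sub (x y : E (m + 1)) : lastc (x - y) = lastc x - lastc y := by
  simp [lastc, PiLp.sub_apply]

lemma continuous_lastc : Continuous (lastc (m := m)) := by
  have : Continuous fun x : E (m+1) => x (Fin.last m) :=
    (continuous_apply (Fin.last m)).comp (PiLp.continuous_ofLp 2 _)
  exact this

lemma continuous_head : Continuous (head (m := m)) := by
  have : Continuous fun (x : E (m+1)) (j : Fin m) => x j.castSucc := by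
    refine continuous_pi fun j => ?_
    exact (continuous_apply (j.castSucc : Fin (m+1))).comp (PiLp.continuous_ofLp 2 _)
  exact ((PiLp.continuous_toLp 2 (fun _ : Fin m => ℝ))).comp this

lemma continuous_snoc : Continuous fun p : E m × ℝ => snoc p.1 p.2 := by
  have : Continuous fun (p : E m × ℝ) (i : Fin (m+1)) =>
      (Fin.snoc (fun j => p.1 j) p.2 : Fin (m+1) → ℝ) i := by
    refine continuous_pi fun i => ?_
    refine Fin.lastCases ?_ (fun j => ?_) i
    · simpa [Fin.snoc_last] using continuous_snd
    · simp only [Fin.snoc_castSucc]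
      fun_prop
  exact ((PiLp.continuous_toLp 2 (fun _ : Fin (m+1) => ℝ))).comp this

end Transmission
end Basic
section Env
namespace Transmission
variable {m : ℕ}

lemma norm_le_norm_snoc (x' : E m) (t : ℝ) : ‖x'‖ ≤ ‖snoc x' t‖ := by
  have h := norm_snoc_sq x' t
  nlinarith [norm_nonneg x', norm_nonneg (snoc x' t), sq_nonneg t]

lemma envSet_bddAbove (u : E (m+1) → ℝ) {C : ℝ}
    (hC : ∀ x ∈ ball (0 : E (m+1)) 1, |u x| ≤ C)
    {ρ ε : ℝ} (hρ1 : ρ < 1) (hε : 0 < ε) (y : E (m+1)) :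
    BddAbove ((fun x' : E m => u (snoc x' (lastc y)) - ε⁻¹ * ‖x' - head y‖ ^ 2) ''
      {x' : E m | snoc x' (lastc y) ∈ closedBall (0 : E (m+1)) ρ}) := by
  refine ⟨C, ?_⟩
  rintro v ⟨x', hx', rfl⟩
  have hb : snoc x' (lastc y) ∈ ball (0 : E (m+1)) 1 :=
    lt_of_le_of_lt (by simpa using hx') hρ1
  have h1 : u (snoc x' (lastc y)) ≤ C := (abs_le.1 (hC _ hb)).2
  have h2 : 0 ≤ ε⁻¹ * ‖x' - head y‖ ^ 2 := by positivity
  linarith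

lemma le_upperEnv (u : E (m+1) → ℝ) {C : ℝ}
    (hC : ∀ x ∈ ball (0 : E (m+1)) 1, |u x| ≤ C)
    {ρ ε : ℝ} (hρ1 : ρ < 1) (hε : 0 < ε) (y : E (m+1)) (x' : E m)
    (hx' : snoc x' (lastc y) ∈ closedBall (0 : E (m+1)) ρ) :
    u (snoc x' (lastc y)) - ε⁻¹ * ‖x' - head y‖ ^ 2 ≤ upperEnv ρ ε u y :=
  le_csSup (envSet_bddAbove u hC hρ1 hε y) ⟨x', hx', rfl⟩

lemma self_le_upperEnv (u : E (m+1) → ℝ) {C : ℝ}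
    (hC : ∀ x ∈ ball (0 : E (m+1)) 1, |u x| ≤ C)
    {ρ ε : ℝ} (hρ1 : ρ < 1) (hε : 0 < ε) (y : E (m+1))
    (hy : y ∈ closedBall (0 : E (m+1)) ρ) :
    u y ≤ upperEnv ρ ε u y := by
  have := le_upperEnv u hC hρ1 hε y (head y) (by rwa [snoc_head_lastc])
  rw [snoc_head_lastc] at this
  simpa using this

/-- Existence of a maximizer in the definition of the upper envelope. -/
lemma upperEnv_max (u : E (m+1) → ℝ) {C : ℝ}
    (hC : ∀ x ∈ ball (0 : E (m+1)) 1, |u x| ≤ C)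
    (husc : UpperSemicontinuousOn u (ball (0 : E (m+1)) 1))
    {ρ ε : ℝ} (hρ1 : ρ < 1) (hε : 0 < ε) (y : E (m+1))
    (hy : y ∈ closedBall (0 : E (m+1)) ρ) :
    ∃ x' : E m, snoc x' (lastc y) ∈ closedBall (0 : E (m+1)) ρ ∧
      upperEnv ρ ε u y = u (snoc x' (lastc y)) - ε⁻¹ * ‖x' - head y‖ ^ 2 := by
  set t := lastc y with ht
  set S := ((fun x' : E m => u (snoc x' t) - ε⁻¹ * ‖x' - head y‖ ^ 2) ''
      {x' : E m | snoc x' t ∈ closedBall (0 : E (m+1)) ρ}) with hS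
  have hne : S.Nonempty := ⟨_, ⟨head y, by rwa [mem_setOf_eq, snoc_head_lastc], rfl⟩⟩
  have hbdd : BddAbove S := envSet_bddAbove u hC hρ1 hε y
  obtain ⟨w, hwmono, hwt, hwS⟩ := exists_seq_tendsto_sSup hne hbdd
  choose xs hxs hval using fun k => hwS k
  -- the maximizing sequence lies in a compact ball
  have hxball : ∀ k, xs k ∈ closedBall (0 : E m) ρ := fun k => by
    have := (norm_le_norm_snoc (xs k) t).trans (by simpa using hxs k)
    simpa using this
  obtain ⟨xb, hxb, φ, hφmono, hφt⟩ :=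
    (isCompact_closedBall (0 : E m) ρ).tendsto_subseq hxball
  have hzt : Tendsto (fun k => snoc (xs (φ k)) t) atTop (nhds (snoc xb t)) := by
    have : Tendsto (fun k => ((xs (φ k) : E m), t)) atTop (nhds (xb, t)) :=
      hφt.prodMk_nhds tendsto_const_nhds
    exact (continuous_snoc.tendsto _).comp this
  have hzb : snoc xb t ∈ closedBall (0 : E (m+1)) ρ :=
    Metric.isClosed_closedBall.mem_of_tendsto hzt (Eventually.of_forall fun k => hxs (φ k))
  have hzb1 : snoc xb t ∈ ball (0 : E (m+1)) 1 := lt_of_le_of_lt (by simpa using hzb) hρ1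
  have hqt : Tendsto (fun k => ε⁻¹ * ‖xs (φ k) - head y‖ ^ 2) atTop
      (nhds (ε⁻¹ * ‖xb - head y‖ ^ 2)) := by
    have : Continuous fun z : E m => ε⁻¹ * ‖z - head y‖ ^ 2 := by continuity
    exact (this.tendsto _).comp hφt
  have hut : Tendsto (fun k => u (snoc (xs (φ k)) t)) atTop
      (nhds (sSup S + ε⁻¹ * ‖xb - head y‖ ^ 2)) := by
    have h1 : Tendsto (fun k => w (φ k)) atTop (nhds (sSup S)) :=
      hwt.comp (hφmono.tendsto_atTop)
    have := h1.add hqt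
    refine this.congr fun k => ?_
    rw [← hval (φ k)]; ring
  -- upper semicontinuity gives the bound
  have key : sSup S + ε⁻¹ * ‖xb - head y‖ ^ 2 ≤ u (snoc xb t) := by
    by_contra hlt
    push_neg at hlt
    set c := (u (snoc xb t) + (sSup S + ε⁻¹ * ‖xb - head y‖ ^ 2)) / 2 with hc
    have hc1 : u (snoc xb t) < c := by rw [hc]; linarith
    have hc2 : c < sSup S + ε⁻¹ * ‖xb - head y‖ ^ 2 := by rw [hc]; linarith
    have husc' := husc _ hzb1 c hc1
    have hzt' : Tendsto (fun k => snoc (xs (φ k)) t) atTop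
        (nhdsWithin (snoc xb t) (ball (0 : E (m+1)) 1)) :=
      tendsto_nhdsWithin_of_tendsto_nhds_of_eventually_within _ hzt
        (Eventually.of_forall fun k => by
          have h := hxs (φ k)
          rw [mem_setOf_eq, mem_closedBall_zero_iff] at h
          exact mem_ball_zero_iff.mpr (lt_of_le_of_lt h hρ1))
    have hev : ∀ᶠ k in atTop, u (snoc (xs (φ k)) t) < c := hzt' husc'
    have := le_of_tendsto hut (hev.mono fun k hk => le_of_lt hk)
    linarith
  have hle : u (snoc xb t) - ε⁻¹ * ‖xb - head y‖ ^ 2 ≤ sSup S :=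
    le_csSup hbdd ⟨xb, hzb, rfl⟩
  have he : upperEnv ρ ε u y = sSup S := rfl
  exact ⟨xb, hzb, by rw [he]; linarith⟩

end Transmission
end Env
section USC
namespace Transmission
variable {m : ℕ}

set_option maxHeartbeats 1000000 in
/-- The upper envelope is upper semicontinuous on `B_ρ`. -/
lemma upperEnv_usc (u : E (m+1) → ℝ) {C : ℝ}
    (hC : ∀ x ∈ ball (0 : E (m+1)) 1, |u x| ≤ C)
    (husc : UpperSemicontinuousOn u (ball (0 : E (m+1)) 1))
    {ρ ε : ℝ} (hρ1 : ρ < 1) (hε : 0 < ε) :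
    UpperSemicontinuousOn (upperEnv ρ ε u) (ball (0 : E (m+1)) ρ) := by
  intro y₀ hy₀ c hc
  by_contra hcon
  rw [Filter.not_eventually] at hcon
  have hcon' : ∃ᶠ y in nhdsWithin y₀ (ball (0 : E (m+1)) ρ),
      (¬ upperEnv ρ ε u y < c) ∧ y ∈ ball (0 : E (m+1)) ρ :=
    hcon.and_eventually self_mem_nhdsWithin
  obtain ⟨ys, hyst, hysp⟩ := Filter.exists_seq_forall_of_frequently hcon'
  have hysc : ∀ k, c ≤ upperEnv ρ ε u (ys k) := fun k => not_lt.1 (hysp k).1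
  have hysb : ∀ k, ys k ∈ closedBall (0 : E (m+1)) ρ :=
    fun k => ball_subset_closedBall (hysp k).2
  choose xs hxs hval using fun k =>
    upperEnv_max u hC husc hρ1 hε (ys k) (hysb k)
  have hxball : ∀ k, xs k ∈ closedBall (0 : E m) ρ := fun k => by
    have h := (norm_le_norm_snoc (xs k) (lastc (ys k))).trans
      (mem_closedBall_zero_iff.1 (hxs k))
    exact mem_closedBall_zero_iff.2 h
  obtain ⟨xb, hxb, φ, hφmono, hφt⟩ :=
    (isCompact_closedBall (0 : E m) ρ).tendsto_subseq hxball
  have hyst' : Tendsto (fun k => ys (φ k)) atTop (nhds y₀) :=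
    (hyst.comp hφmono.tendsto_atTop).mono_right nhdsWithin_le_nhds
  have hzt : Tendsto (fun k => snoc (xs (φ k)) (lastc (ys (φ k)))) atTop
      (nhds (snoc xb (lastc y₀))) := by
    have h1 : Tendsto (fun k => ((xs (φ k) : E m), lastc (ys (φ k)))) atTop
        (nhds (xb, lastc y₀)) :=
      hφt.prodMk_nhds ((continuous_lastc.tendsto _).comp hyst')
    exact (continuous_snoc.tendsto _).comp h1
  have hzb : snoc xb (lastc y₀) ∈ closedBall (0 : E (m+1)) ρ :=
    Metric.isClosed_closedBall.mem_of_tendsto hzt (Eventually.of_forall fun k => hxs (φ k))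
  have hzb1 : snoc xb (lastc y₀) ∈ ball (0 : E (m+1)) 1 :=
    mem_ball_zero_iff.2 (lt_of_le_of_lt (mem_closedBall_zero_iff.1 hzb) hρ1)
  have hqt : Tendsto (fun k => ε⁻¹ * ‖xs (φ k) - head (ys (φ k))‖ ^ 2) atTop
      (nhds (ε⁻¹ * ‖xb - head y₀‖ ^ 2)) := by
    have hn : Tendsto (fun k => xs (φ k) - head (ys (φ k))) atTop
        (nhds (xb - head y₀)) :=
      hφt.sub ((continuous_head.tendsto _).comp hyst')
    exact (hn.norm.pow 2).const_mul ε⁻¹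
  set qb := ε⁻¹ * ‖xb - head y₀‖ ^ 2 with hqb
  have hvle : u (snoc xb (lastc y₀)) - qb ≤ upperEnv ρ ε u y₀ :=
    le_upperEnv u hC hρ1 hε y₀ xb hzb
  have hult : u (snoc xb (lastc y₀)) - qb < c := lt_of_le_of_lt hvle hc
  set γ := (c - (u (snoc xb (lastc y₀)) - qb)) / 2 with hγ
  have hγ0 : 0 < γ := by rw [hγ]; linarith
  have hev1 : ∀ᶠ k in atTop, u (snoc (xs (φ k)) (lastc (ys (φ k)))) <
      u (snoc xb (lastc y₀)) + γ := by
    have husc' := husc _ hzb1 (u (snoc xb (lastc y₀)) + γ) (by linarith)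
    have hzt' : Tendsto (fun k => snoc (xs (φ k)) (lastc (ys (φ k)))) atTop
        (nhdsWithin (snoc xb (lastc y₀)) (ball (0 : E (m+1)) 1)) :=
      tendsto_nhdsWithin_of_tendsto_nhds_of_eventually_within _ hzt
        (Eventually.of_forall fun k => mem_ball_zero_iff.2
          (lt_of_le_of_lt (mem_closedBall_zero_iff.1 (hxs (φ k))) hρ1))
    exact hzt' husc'
  have hev2 : ∀ᶠ k in atTop,
      qb - γ < ε⁻¹ * ‖xs (φ k) - head (ys (φ k))‖ ^ 2 :=
    hqt.eventually (eventually_gt_nhds (by linarith))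
  obtain ⟨k, hk1, hk2⟩ := (hev1.and hev2).exists
  have hvk := hysc (φ k)
  rw [hval (φ k)] at hvk
  have : c < c := by
    calc c ≤ u (snoc (xs (φ k)) (lastc (ys (φ k)))) -
        ε⁻¹ * ‖xs (φ k) - head (ys (φ k))‖ ^ 2 := hvk
    _ < (u (snoc xb (lastc y₀)) + γ) - (qb - γ) := by linarith
    _ = c := by rw [hγ]; ring
  exact lt_irrefl c this

end Transmission
end USC
section Hess
namespace Transmission

lemma contDiffAt_translate {d : ℕ} (φ : E d → ℝ) (s : E d) (c : ℝ) (x₀ : E d)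
    (hφ : ContDiffAt ℝ 2 φ (x₀ - s)) :
    ContDiffAt ℝ 2 (fun x => φ (x - s) + c) x₀ := by
  have h1 : ContDiffAt ℝ 2 (fun x : E d => x - s) x₀ :=
    (contDiff_id.sub contDiff_const).contDiffAt
  exact (hφ.comp x₀ h1).add contDiffAt_const

lemma hess_translate {d : ℕ} (φ : E d → ℝ) (s : E d) (c : ℝ) (x₀ : E d)
    (hφ : ContDiffAt ℝ 2 φ (x₀ - s)) :
    hess (fun x => φ (x - s) + c) x₀ = hess φ (x₀ - s) := by
  have hev : (fderiv ℝ (fun x => φ (x - s) + c)) =ᶠ[nhds x₀]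
      (fun x => fderiv ℝ φ (x - s)) := by
    have hev0 : ∀ᶠ y in nhds (x₀ - s), ContDiffAt ℝ 2 φ y :=
      hφ.eventually (by norm_num)
    have htend : Tendsto (fun x : E d => x - s) (nhds x₀) (nhds (x₀ - s)) :=
      (continuous_id.sub continuous_const).tendsto x₀
    filter_upwards [htend.eventually hev0] with x hx
    have hd : DifferentiableAt ℝ φ (x - s) := hx.differentiableAt (by norm_num)
    have h1 : HasFDerivAt (fun z : E d => z - s) (ContinuousLinearMap.id ℝ (E d)) x :=
      (hasFDerivAt_id x).sub_const s
    have h2 : HasFDerivAt (fun z => φ (z - s) + c)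
        ((fderiv ℝ φ (x - s)).comp (ContinuousLinearMap.id ℝ (E d))) x :=
      (hd.hasFDerivAt.comp x h1).add_const c
    rw [h2.fderiv, ContinuousLinearMap.comp_id]
  have hd2 : DifferentiableAt ℝ (fderiv ℝ φ) (x₀ - s) :=
    (hφ.fderiv_right (m := 1) (by norm_num)).differentiableAt one_ne_zero
  have h3 : HasFDerivAt (fun x => fderiv ℝ φ (x - s))
      ((fderiv ℝ (fderiv ℝ φ) (x₀ - s)).comp (ContinuousLinearMap.id ℝ (E d))) x₀ :=
    hd2.hasFDerivAt.comp x₀ ((hasFDerivAt_id x₀).sub_const s)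
  funext i j
  show iteratedFDeriv ℝ 2 (fun x => φ (x - s) + c) x₀ _ = iteratedFDeriv ℝ 2 φ (x₀ - s) _
  rw [iteratedFDeriv_two_apply, iteratedFDeriv_two_apply, hev.fderiv_eq, h3.fderiv,
    ContinuousLinearMap.comp_id]

lemma sub_modulus_le {d : ℕ} (f : E d → ℝ) (s : Set (E d)) {C : ℝ}
    (hb : ∀ x ∈ s, |f x| ≤ C) {x y : E d} (hx : x ∈ s) (hy : y ∈ s) {t : ℝ}
    (hd : dist x y ≤ t) : f x - modulusOn f s t ≤ f y := by
  have hbdd : BddAbove ((fun p : E d × E d => |f p.1 - f p.2|) ''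
      {p : E d × E d | p.1 ∈ s ∧ p.2 ∈ s ∧ dist p.1 p.2 ≤ t}) := by
    refine ⟨2 * C, ?_⟩
    rintro v ⟨⟨a, b⟩, ⟨ha, hb', _⟩, rfl⟩
    have h1 := hb a ha; have h2 := hb b hb'
    calc |f a - f b| ≤ |f a| + |f b| := abs_sub _ _
      _ ≤ 2 * C := by linarith
  have hmem : |f x - f y| ≤ modulusOn f s t :=
    le_csSup hbdd ⟨(x, y), ⟨hx, hy, hd⟩, rfl⟩
  have := abs_le.1 (abs_abs (f x - f y) ▸ hmem.trans_eq' rfl)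
  have h3 : f x - f y ≤ modulusOn f s t := (le_abs_self _).trans hmem
  linarith

end Transmission
end Hess
section MaxD
namespace Transmission
variable {m : ℕ}

lemma norm_snoc_zero (w : E m) : ‖snoc w (0 : ℝ)‖ = ‖w‖ := by
  have h := norm_snoc_sq w 0
  nlinarith [norm_nonneg (snoc w (0:ℝ)), norm_nonneg w]

lemma maximizer_dist (u : E (m+1) → ℝ) {C ρ ε rε : ℝ}
    (hC : ∀ x ∈ ball (0 : E (m+1)) 1, |u x| ≤ C)
    (hε : 0 < ε) (hρ1 : ρ < 1) (hrε0 : 0 ≤ rε) (hrsq : 2 * ε * C ≤ rε ^ 2)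
    {y : E (m+1)} (hy : y ∈ closedBall (0 : E (m+1)) ρ) {x' : E m}
    (hfeas : snoc x' (lastc y) ∈ closedBall (0 : E (m+1)) ρ)
    (hmax : upperEnv ρ ε u y = u (snoc x' (lastc y)) - ε⁻¹ * ‖x' - head y‖ ^ 2) :
    ‖x' - head y‖ ≤ rε := by
  have hy1 : y ∈ ball (0 : E (m+1)) 1 :=
    mem_ball_zero_iff.2 (lt_of_le_of_lt (mem_closedBall_zero_iff.1 hy) hρ1)
  have hz1 : snoc x' (lastc y) ∈ ball (0 : E (m+1)) 1 :=
    mem_ball_zero_iff.2 (lt_of_le_of_lt (mem_closedBall_zero_iff.1 hfeas) hρ1)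
  have h1 : u y ≤ upperEnv ρ ε u y := self_le_upperEnv u hC hρ1 hε y hy
  have h2 := abs_le.1 (hC _ hy1)
  have h3 := abs_le.1 (hC _ hz1)
  have h4 : ε⁻¹ * ‖x' - head y‖ ^ 2 ≤ 2 * C := by
    rw [hmax] at h1; linarith
  have h5 : ‖x' - head y‖ ^ 2 ≤ 2 * ε * C := by
    calc ‖x' - head y‖ ^ 2 = ε * (ε⁻¹ * ‖x' - head y‖ ^ 2) := by field_simp
      _ ≤ ε * (2 * C) := mul_le_mul_of_nonneg_left h4 hε.le
      _ = 2 * ε * C := by ring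
  nlinarith [norm_nonneg (x' - head y)]

/-- The key pointwise inequality `u x ≤ u^ε (x - s) + ε⁻¹‖w‖²` where `s = snoc w 0`. -/
lemma le_upperEnv_translate (u : E (m+1) → ℝ) {C : ℝ}
    (hC : ∀ x ∈ ball (0 : E (m+1)) 1, |u x| ≤ C)
    {ρ ε : ℝ} (hρ1 : ρ < 1) (hε : 0 < ε) (w : E m) {x : E (m+1)}
    (hx : x ∈ closedBall (0 : E (m+1)) ρ) :
    u x ≤ upperEnv ρ ε u (x - snoc w 0) + ε⁻¹ * ‖w‖ ^ 2 := by
  have hl : lastc (x - snoc w 0) = lastc x := by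
    rw [lastc_sub, lastc_snoc, sub_zero]
  have hfeas : snoc (head x) (lastc (x - snoc w 0)) ∈ closedBall (0 : E (m+1)) ρ := by
    rw [hl, snoc_head_lastc]; exact hx
  have := le_upperEnv u hC hρ1 hε (x - snoc w 0) (head x) hfeas
  rw [hl, snoc_head_lastc] at this
  have hh : head x - head (x - snoc w 0) = w := by
    rw [head_sub, head_snoc]; abel
  rw [hh] at this; linarith
end Transmission
end MaxD
section IntStep
namespace Transmission
variable {m : ℕ}

lemma visc_sub_env
    (F : Matrix (Fin (m+1)) (Fin (m+1)) ℝ → ℝ) (f u : E (m+1) → ℝ) {C Cf : ℝ}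
    (hC : ∀ x ∈ ball (0 : E (m+1)) 1, |u x| ≤ C)
    (husc : UpperSemicontinuousOn u (ball (0 : E (m+1)) 1))
    (P : ℝ → Prop) (O O' : Set (E (m+1)))
    (hO : O = {x : E (m+1) | x ∈ ball (0 : E (m+1)) 1 ∧ P (lastc x)})
    (hf : ∀ x ∈ O, |f x| ≤ Cf)
    (hvisc : ViscSubOn F f u O)
    {ρ ε rε r : ℝ} (hρ1 : ρ < 1) (hε : 0 < ε) (hrε0 : 0 ≤ rε)
    (hrsq : 2 * ε * C ≤ rε ^ 2) (hr0 : 0 < r) (hrρ : r ≤ ρ - rε)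
    (hO' : O' = {x : E (m+1) | x ∈ ball (0 : E (m+1)) r ∧ P (lastc x)}) :
    ViscSubOn F (fun x => f x - modulusOn f O rε) (upperEnv ρ ε u) O' := by
  subst hO hO'
  intro y₀ hy₀ φ hφ htouch
  obtain ⟨hy₀r, hPy₀⟩ := hy₀
  have hy₀ρ : ‖y₀‖ < ρ - rε := lt_of_lt_of_le (mem_ball_zero_iff.1 hy₀r) hrρ
  have hy₀cb : y₀ ∈ closedBall (0 : E (m+1)) ρ := by
    rw [mem_closedBall_zero_iff]; linarith
  obtain ⟨x₀', hfeas, hmax⟩ := upperEnv_max u hC husc hρ1 hε y₀ hy₀cb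
  have hd : ‖x₀' - head y₀‖ ≤ rε :=
    maximizer_dist u hC hε hρ1 hrε0 hrsq hy₀cb hfeas hmax
  set w := x₀' - head y₀ with hw
  set s : E (m+1) := snoc w 0 with hs
  set x₀ := snoc x₀' (lastc y₀) with hx₀
  have hxs : x₀ - s = y₀ := by
    have h1 : x₀ - s = snoc (x₀' - w) (lastc y₀ - 0) := by
      rw [snoc_sub]
    rw [h1, hw, sub_sub_cancel, sub_zero, snoc_head_lastc]
  have hns : ‖s‖ = ‖w‖ := norm_snoc_zero w
  have hx₀ρ : ‖x₀‖ < ρ := by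
    have : x₀ = y₀ + s := by rw [← hxs]; abel
    calc ‖x₀‖ ≤ ‖y₀‖ + ‖s‖ := by rw [this]; exact norm_add_le _ _
      _ < (ρ - rε) + rε := by rw [hns]; exact add_lt_add_of_lt_of_le hy₀ρ (hw ▸ hd)
      _ = ρ := by ring
  have hlx₀ : lastc x₀ = lastc y₀ := lastc_snoc _ _
  have hx₀O : x₀ ∈ {x : E (m+1) | x ∈ ball (0 : E (m+1)) 1 ∧ P (lastc x)} :=
    ⟨mem_ball_zero_iff.2 (hx₀ρ.trans hρ1), by rw [hlx₀]; exact hPy₀⟩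
  set c := ε⁻¹ * ‖w‖ ^ 2 with hc
  set ψ := fun x => φ (x - s) + c with hψ
  have hψcd : ContDiffAt ℝ 2 ψ x₀ :=
    contDiffAt_translate φ s c x₀ (by rw [hxs]; exact hφ)
  have hψeq : ψ x₀ = u x₀ := by
    show φ (x₀ - s) + c = u x₀
    rw [hxs, htouch.1, hmax, hc, hw, hx₀]; ring
  have hball_ev : ∀ᶠ x in nhds x₀, x ∈ ball (0 : E (m+1)) ρ :=
    Metric.isOpen_ball.eventually_mem (mem_ball_zero_iff.2 hx₀ρ)
  have htends : Tendsto (fun x : E (m+1) => x - s) (nhds x₀) (nhds y₀) := by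
    have h := Continuous.tendsto (f := fun x : E (m+1) => x - s)
      (continuous_id.sub continuous_const) x₀
    rwa [hxs] at h
  have hball_ev2 : ∀ᶠ x in nhds x₀, x - s ∈ ball (0 : E (m+1)) r :=
    htends.eventually (Metric.isOpen_ball.eventually_mem hy₀r)
  have htouch_ev : ∀ᶠ x in nhds x₀,
      (x - s ∈ {x : E (m+1) | x ∈ ball (0 : E (m+1)) r ∧ P (lastc x)} →
        upperEnv ρ ε u (x - s) ≤ φ (x - s)) :=
    htends.eventually htouch.2
  have happ : f x₀ ≤ F (hess ψ x₀) := by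
    refine hvisc x₀ hx₀O ψ hψcd ⟨hψeq, ?_⟩
    filter_upwards [hball_ev, hball_ev2, htouch_ev] with x h1 h2 h3 hxO
    have hxO' : x - s ∈ {x : E (m+1) | x ∈ ball (0 : E (m+1)) r ∧ P (lastc x)} := by
      refine ⟨h2, ?_⟩
      rw [lastc_sub, hs, lastc_snoc, sub_zero]
      exact hxO.2
    have h4 := h3 hxO'
    have h5 := le_upperEnv_translate u hC hρ1 hε w (ball_subset_closedBall h1)
    calc u x ≤ upperEnv ρ ε u (x - snoc w 0) + ε⁻¹ * ‖w‖ ^ 2 := h5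
      _ = upperEnv ρ ε u (x - s) + c := by rw [← hs, ← hc]
      _ ≤ φ (x - s) + c := by linarith
      _ = ψ x := rfl
  have hhess : hess ψ x₀ = hess φ y₀ := by
    rw [hψ, hess_translate φ s c x₀ (by rw [hxs]; exact hφ), hxs]
  have hy₀O : y₀ ∈ {x : E (m+1) | x ∈ ball (0 : E (m+1)) 1 ∧ P (lastc x)} :=
    ⟨mem_ball_zero_iff.2 (by linarith [hrε0]), hPy₀⟩
  have hdist : dist y₀ x₀ ≤ rε := by
    rw [dist_eq_norm]
    have : y₀ - x₀ = -s := by rw [← hxs]; abel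
    rw [this, norm_neg, hns]
    exact hw ▸ hd
  have hmod := sub_modulus_le f _ hf hy₀O hx₀O hdist
  show f y₀ - modulusOn f _ rε ≤ F (hess φ y₀)
  rw [← hhess]
  linarith

end Transmission
end IntStep
section TrStep
namespace Transmission
variable {m : ℕ}

lemma dist_sub_self_right (a b c : E (m+1)) : dist (a - c) (b - c) = dist a b := by
  rw [dist_eq_norm, dist_eq_norm]
  congr 1
  abel

set_option maxHeartbeats 1000000 in
lemma trans_sub_env (g u : E (m+1) → ℝ) {C Cg : ℝ}
    (hC : ∀ x ∈ ball (0 : E (m+1)) 1, |u x| ≤ C)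
    (husc : UpperSemicontinuousOn u (ball (0 : E (m+1)) 1))
    (hg : ∀ x ∈ TR m 1, |g x| ≤ Cg)
    (htr : ∀ x₀ ∈ TR m 1, FlatTransSubAt g u x₀)
    {ρ ε rε r : ℝ} (hρ1 : ρ < 1) (hε : 0 < ε) (hrε0 : 0 ≤ rε)
    (hrsq : 2 * ε * C ≤ rε ^ 2) (hr0 : 0 < r) (hrρ : r ≤ ρ - rε) :
    ∀ y₀ ∈ TR m r,
      FlatTransSubAt (fun x => g x - modulusOn g (TR m 1) rε) (upperEnv ρ ε u) y₀ := by
  rintro y₀ ⟨hy₀r, hy₀l⟩ δ hδ φ Lp Lm hφc hφp hφm hLp hLm heq hab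
  have hy₀ρ : ‖y₀‖ < ρ - rε := lt_of_lt_of_le (mem_ball_zero_iff.1 hy₀r) hrρ
  have hy₀cb : y₀ ∈ closedBall (0 : E (m+1)) ρ := by
    rw [mem_closedBall_zero_iff]; linarith
  obtain ⟨x₀', hfeas, hmax⟩ := upperEnv_max u hC husc hρ1 hε y₀ hy₀cb
  have hd : ‖x₀' - head y₀‖ ≤ rε :=
    maximizer_dist u hC hε hρ1 hrε0 hrsq hy₀cb hfeas hmax
  set w := x₀' - head y₀ with hw
  set s : E (m+1) := snoc w 0 with hs
  set x₀ := snoc x₀' (lastc y₀) with hx₀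
  have hxs : x₀ - s = y₀ := by
    have h1 : x₀ - s = snoc (x₀' - w) (lastc y₀ - 0) := by rw [snoc_sub]
    rw [h1, hw, sub_sub_cancel, sub_zero, snoc_head_lastc]
  have hns : ‖s‖ = ‖w‖ := norm_snoc_zero w
  have hx₀ρ : ‖x₀‖ < ρ := by
    have hxe : x₀ = y₀ + s := by rw [← hxs]; abel
    calc ‖x₀‖ ≤ ‖y₀‖ + ‖s‖ := by rw [hxe]; exact norm_add_le _ _
      _ < (ρ - rε) + rε := by rw [hns]; exact add_lt_add_of_lt_of_le hy₀ρ (hw ▸ hd)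
      _ = ρ := by ring
  have hlx₀ : lastc x₀ = lastc y₀ := lastc_snoc _ _
  have hx₀T : x₀ ∈ TR m 1 :=
    ⟨mem_ball_zero_iff.2 (hx₀ρ.trans hρ1), by rw [hlx₀]; exact hy₀l⟩
  set c := ε⁻¹ * ‖w‖ ^ 2 with hc
  set ψ := fun x => φ (x - s) + c with hψ
  set δ' := min δ (ρ - ‖x₀‖) with hδ'
  have hδ'0 : 0 < δ' := lt_min hδ (by linarith)
  have hδ'δ : δ' ≤ δ := min_le_left _ _
  have hδ'ρ : δ' ≤ ρ - ‖x₀‖ := min_le_right _ _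
  have hls : lastc s = 0 := lastc_snoc _ _
  -- translation maps
  have hmapsB : MapsTo (fun x : E (m+1) => x - s) (ball x₀ δ') (ball y₀ δ) := by
    intro a ha
    rw [mem_ball] at ha ⊢
    calc dist (a - s) y₀ = dist (a - s) (x₀ - s) := by rw [hxs]
      _ = dist a x₀ := dist_sub_self_right a x₀ s
      _ < δ' := ha
      _ ≤ δ := hδ'δ
  have hmapsP : MapsTo (fun x : E (m+1) => x - s)
      (closure (ball x₀ δ' ∩ Hp m)) (closure (ball y₀ δ ∩ Hp m)) := by
    intro a ha
    refine map_mem_closure (f := fun x : E (m+1) => x - s)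
      (continuous_id.sub continuous_const) ha ?_
    rintro b ⟨hb1, hb2⟩
    exact ⟨hmapsB hb1, by show (0:ℝ) < lastc (b - s); rw [lastc_sub, hls, sub_zero]; exact hb2⟩
  have hmapsM : MapsTo (fun x : E (m+1) => x - s)
      (closure (ball x₀ δ' ∩ Hm m)) (closure (ball y₀ δ ∩ Hm m)) := by
    intro a ha
    refine map_mem_closure (f := fun x : E (m+1) => x - s)
      (continuous_id.sub continuous_const) ha ?_
    rintro b ⟨hb1, hb2⟩
    exact ⟨hmapsB hb1, by show lastc (b - s) < (0:ℝ); rw [lastc_sub, hls, sub_zero]; exact hb2⟩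
  have hτ : ContDiff ℝ 2 (fun x : E (m+1) => x - s) := contDiff_id.sub contDiff_const
  have hτc : Continuous (fun x : E (m+1) => x - s) := continuous_id.sub continuous_const
  -- apply the transmission condition for `u` at `x₀`
  have happ : g x₀ ≤ Lp (en m) - Lm (en m) := by
    refine htr x₀ hx₀T δ' hδ'0 ψ Lp Lm ?_ ?_ ?_ ?_ ?_ ?_ ?_
    · exact ((hφc.comp hτc.continuousOn hmapsB).add continuousOn_const)
    · exact ((hφp.comp hτ.contDiffOn hmapsP).add contDiffOn_const)
    · exact ((hφm.comp hτ.contDiffOn hmapsM).add contDiffOn_const)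
    · have hτd : HasFDerivWithinAt (fun x : E (m+1) => x - s)
          (ContinuousLinearMap.id ℝ (E (m+1))) (closure (ball x₀ δ' ∩ Hp m)) x₀ :=
        ((hasFDerivAt_id x₀).sub_const s).hasFDerivWithinAt
      have hLp' : HasFDerivWithinAt φ Lp (closure (ball y₀ δ ∩ Hp m))
          ((fun x : E (m+1) => x - s) x₀) := by
        show HasFDerivWithinAt φ Lp _ (x₀ - s); rw [hxs]; exact hLp
      have h := (hLp'.comp x₀ hτd hmapsP).add_const c
      rw [ContinuousLinearMap.comp_id] at h
      exact h
    · have hτd : HasFDerivWithinAt (fun x : E (m+1) => x - s)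
          (ContinuousLinearMap.id ℝ (E (m+1))) (closure (ball x₀ δ' ∩ Hm m)) x₀ :=
        ((hasFDerivAt_id x₀).sub_const s).hasFDerivWithinAt
      have hLm' : HasFDerivWithinAt φ Lm (closure (ball y₀ δ ∩ Hm m))
          ((fun x : E (m+1) => x - s) x₀) := by
        show HasFDerivWithinAt φ Lm _ (x₀ - s); rw [hxs]; exact hLm
      have h := (hLm'.comp x₀ hτd hmapsM).add_const c
      rw [ContinuousLinearMap.comp_id] at h
      exact h
    · show φ (x₀ - s) + c = u x₀
      rw [hxs, heq, hmax]; ring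
    · intro x hx
      have hxn : ‖x - x₀‖ < δ' := by rw [mem_ball, dist_eq_norm] at hx; exact hx
      have hxcb : x ∈ closedBall (0 : E (m+1)) ρ := by
        rw [mem_closedBall_zero_iff]
        have h1 := norm_add_le (x - x₀) x₀
        rw [sub_add_cancel] at h1
        linarith
      have hxb : x - s ∈ ball y₀ δ := hmapsB hx
      have h4 := hab (x - s) hxb
      have h5 := le_upperEnv_translate u hC hρ1 hε w hxcb
      calc u x ≤ upperEnv ρ ε u (x - snoc w 0) + ε⁻¹ * ‖w‖ ^ 2 := h5
        _ = upperEnv ρ ε u (x - s) + c := by rw [← hs, ← hc]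
        _ ≤ φ (x - s) + c := by linarith
        _ = ψ x := rfl
  have hy₀T : y₀ ∈ TR m 1 := ⟨mem_ball_zero_iff.2 (by linarith), hy₀l⟩
  have hdist : dist y₀ x₀ ≤ rε := by
    rw [dist_eq_norm]
    have he : y₀ - x₀ = -s := by rw [← hxs]; abel
    rw [he, norm_neg, hns]
    exact hw ▸ hd
  have hmod := sub_modulus_le g _ hg hy₀T hx₀T hdist
  show g y₀ - modulusOn g (TR m 1) rε ≤ Lp (en m) - Lm (en m)
  linarith

end Transmission
end TrStep
namespace Transmission

/-- **Upper `ε`-envelopes of subsolutions are subsolutions** (Proposition 4.4). -/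
theorem upper_envelope_subsolution (m : ℕ) (hm : 1 ≤ m) (lam Lam : ℝ)
    (hlam : 0 < lam) (hlL : lam ≤ Lam)
    (Fp Fm : Matrix (Fin (m + 1)) (Fin (m + 1)) ℝ → ℝ)
    (hFp : UniformlyElliptic lam Lam Fp) (hFm : UniformlyElliptic lam Lam Fm)
    (fp fm g u : E (m + 1) → ℝ)
    (hfpb : BddOn fp (BpR m 1)) (hfpc : UniformContinuousOn fp (BpR m 1))
    (hfmb : BddOn fm (BmR m 1)) (hfmc : UniformContinuousOn fm (BmR m 1))
    (hgb : BddOn g (TR m 1)) (hgc : UniformContinuousOn g (TR m 1))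
    (hub : BddOn u (ball (0 : E (m + 1)) 1))
    (hsub : FlatSub 1 Fp Fm fp fm g u)
    (ρ ε : ℝ) (hρ0 : 0 < ρ) (hρ1 : ρ < 1) (hε : 0 < ε)
    (rε : ℝ)
    (hrε : rε = Real.sqrt (2 * ε * supOn (fun x => |u x|) (ball (0 : E (m + 1)) 1)))
    (hrερ : rε < ρ) :
    ∀ r : ℝ, 0 < r → r ≤ ρ - rε →
      FlatSub r Fp Fm
        (fun x => fp x - modulusOn fp (BpR m 1) rε)
        (fun x => fm x - modulusOn fm (BmR m 1) rε)
        (fun x => g x - modulusOn g (TR m 1) rε)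
        (upperEnv ρ ε u) := by
  intro r hr0 hrr
  set M := supOn (fun x => |u x|) (ball (0 : E (m + 1)) 1) with hM
  obtain ⟨C0, hC0⟩ := hub
  have hbdd : BddAbove ((fun x => |u x|) '' ball (0 : E (m + 1)) 1) := by
    refine ⟨C0, ?_⟩
    rintro v ⟨x, hx, rfl⟩
    exact hC0 x hx
  have hMb : ∀ x ∈ ball (0 : E (m + 1)) 1, |u x| ≤ M :=
    fun x hx => le_csSup hbdd ⟨x, hx, rfl⟩
  have hM0 : 0 ≤ M := le_trans (abs_nonneg _) (hMb 0 (mem_ball_self one_pos))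
  have hrε0 : 0 ≤ rε := hrε ▸ Real.sqrt_nonneg _
  have hrsq : 2 * ε * M ≤ rε ^ 2 := by
    rw [hrε, Real.sq_sqrt (by positivity)]
  have husc_u : UpperSemicontinuousOn u (ball (0 : E (m + 1)) 1) := hsub.1
  obtain ⟨Cfp, hCfp⟩ := hfpb
  obtain ⟨Cfm, hCfm⟩ := hfmb
  obtain ⟨Cg, hCg⟩ := hgb
  refine ⟨?_, ?_, ?_, ?_⟩
  · exact (upperEnv_usc u hMb husc_u hρ1 hε).mono
      (ball_subset_ball (by linarith))
  · exact visc_sub_env Fp fp u hMb husc_u (fun t => 0 < t) (BpR m 1) (BpR m r) rfl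
      hCfp hsub.2.1 hρ1 hε hrε0 hrsq hr0 hrr rfl
  · exact visc_sub_env Fm fm u hMb husc_u (fun t => t < 0) (BmR m 1) (BmR m r) rfl
      hCfm hsub.2.2.1 hρ1 hε hrε0 hrsq hr0 hrr rfl
  · exact trans_sub_env g u hMb husc_u hCg hsub.2.2.2 hρ1 hε hrε0 hrsq hr0 hrr

end Transmission
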